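/- arXiv:0911.3524 — 2 statements merged into one kernel-verified Lean document; each statement's English description precedes it below -/
import Mathlib

section
/- Let A be a symmetric cellular algebra over an integral domain R with two symmetrizing traces τ and τ', with dual bases D and d respectively. Then for all λ ∈ Λ and S, U, V ∈ M(λ): C^λ_{S,U} d^λ_{U,V} = τ(C^λ_{V,U} d^λ_{U,V}) · C^λ_{S,U} D^λ_{U,V}. Consequently the ideal I is independent of the choice of symmetrizing trace. -/
set_option linter.unusedSectionVars false
set_option maxHeartbeats 1000000
set_option linter.unnecessarySimpa false

section Aux

variable {R A : Type*} [CommRing R] [Ring A] [Algebra R A]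
    {Λ : Type*} [PartialOrder Λ] [Fintype Λ] [DecidableEq Λ]
    {M : Λ → Type*} [∀ l, Fintype (M l)] [∀ l, DecidableEq (M l)]
    (C : ∀ l, M l → M l → A)
    (bC : Module.Basis ((l : Λ) × (M l × M l)) R A)
    (hbC : ∀ l S T, bC ⟨l, (S, T)⟩ = C l S T)

include hbC in
/-- repr of an element of a span of cell elements vanishes outside the index set. -/
theorem reprC_span (p : Λ → Prop) {x : A}
    (hx : x ∈ Submodule.span R {x | ∃ m, ∃ U V : M m, p m ∧ x = C m U V})
    (n : Λ) (P Q : M n) (hn : ¬ p n) : bC.repr x ⟨n, (P, Q)⟩ = 0 := by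
  induction hx using Submodule.span_induction with
  | mem x hx =>
    obtain ⟨m, U, V, hm, rfl⟩ := hx
    rw [← hbC, bC.repr_self]
    refine Finsupp.single_eq_of_ne' ?_
    rintro h
    rw [Sigma.mk.inj_iff] at h
    exact hn (h.1 ▸ hm)
  | zero => simp
  | add x y _ _ hx hy => simp [hx, hy]
  | smul c x _ hx => simp [hx]

variable (t : A →ₗ[R] R)
    (Dd : ∀ l, M l → M l → A)
    (hdual : ∀ l m (S T : M l) (U V : M m),
      t (C l S T * Dd m U V) =
        if (⟨l, (S, T)⟩ : (l : Λ) × (M l × M l)) = ⟨m, (V, U)⟩ then 1 else 0)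

include hbC hdual in
/-- LA : pairing with a dual basis element computes a `bC`-coefficient. -/
theorem LA (x : A) (m : Λ) (X Y : M m) :
    t (x * Dd m X Y) = bC.repr x ⟨m, (Y, X)⟩ := by
  conv_lhs => rw [← bC.sum_repr x]
  rw [Finset.sum_mul, map_sum]
  have : ∀ σ : (l : Λ) × (M l × M l),
      t ((bC.repr x σ • bC σ) * Dd m X Y)
        = bC.repr x σ * (if σ = ⟨m, (Y, X)⟩ then 1 else 0) := by
    rintro ⟨l, S, T⟩
    rw [smul_mul_assoc, map_smul, hbC, hdual, smul_eq_mul]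
  rw [Finset.sum_congr rfl fun σ _ => this σ]
  simp [Finset.sum_ite_eq']


variable (bD : Module.Basis ((l : Λ) × (M l × M l)) R A)
    (hbD : ∀ l S T, bD ⟨l, (S, T)⟩ = Dd l S T)

include hbD hdual in
/-- LB : `bD`-coefficients are computed by pairing with cell elements. -/
theorem LB (x : A) (n : Λ) (P Q : M n) :
    bD.repr x ⟨n, (P, Q)⟩ = t (C n Q P * x) := by
  conv_rhs => rw [← bD.sum_repr x]
  rw [Finset.mul_sum, map_sum]
  have : ∀ σ : (l : Λ) × (M l × M l),
      t (C n Q P * (bD.repr x σ • bD σ))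
        = bD.repr x σ * (if σ = ⟨n, (P, Q)⟩ then 1 else 0) := by
    rintro ⟨l, S, T⟩
    rw [mul_smul_comm, map_smul, hbD, hdual, smul_eq_mul]
    congr 1
    by_cases h : (⟨l, (S, T)⟩ : (l : Λ) × (M l × M l)) = ⟨n, (P, Q)⟩
    · rcases h; simp
    · rw [if_neg h, if_neg]
      rintro he
      rcases he; exact h rfl
  rw [Finset.sum_congr rfl fun σ _ => this σ]
  simp [Finset.sum_ite_eq']


variable (ι : A →ₗ[R] A)
    (hι2 : ∀ x, ι (ι x) = x)
    (hιmul : ∀ x y, ι (x * y) = ι y * ι x)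
    (hC2 : ∀ l (S T : M l), ι (C l S T) - C l T S ∈
      Submodule.span R {x | ∃ m, ∃ U V : M m, m < l ∧ x = C m U V})
    (r : A → ∀ l, M l → M l → R)
    (hC3 : ∀ (a : A) l (S T : M l), a * C l S T - ∑ S', r a l S' S • C l S' T ∈
      Submodule.span R {x | ∃ m, ∃ U V : M m, m < l ∧ x = C m U V})

/-- The span of cell elements over a predicate on `Λ`. -/
def spanC (p : Λ → Prop) : Submodule R A :=
  Submodule.span R {x | ∃ m, ∃ U V : M m, p m ∧ x = C m U V}

theorem memC {p : Λ → Prop} {m : Λ} (U V : M m) (hm : p m) :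
    C m U V ∈ spanC (R := R) C p :=
  Submodule.subset_span ⟨m, U, V, hm, rfl⟩

theorem spanC_mono {p q : Λ → Prop} (h : ∀ m, p m → q m) :
    spanC (R := R) C p ≤ spanC (R := R) C q := by
  refine Submodule.span_mono ?_
  rintro x ⟨m, U, V, hm, rfl⟩
  exact ⟨m, U, V, h m hm, rfl⟩

section Ideal

variable {p : Λ → Prop} (hp : ∀ {{m n : Λ}}, m ≤ n → p n → p m)

include hC3 hp in
theorem mul_mem_left {x : A} (hx : x ∈ spanC (R := R) C p) (a : A) :
    a * x ∈ spanC (R := R) C p := by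
  induction hx using Submodule.span_induction with
  | mem x hx =>
    obtain ⟨m, U, V, hm, rfl⟩ := hx
    have h1 := hC3 a m U V
    have h2 : a * C m U V
        = (a * C m U V - ∑ S', r a m S' U • C m S' V) + ∑ S', r a m S' U • C m S' V :=
      (sub_add_cancel _ _).symm
    rw [h2]
    refine Submodule.add_mem _ (spanC_mono C (fun m' hm' => hp hm'.le hm) h1) ?_
    exact Submodule.sum_mem _ fun S' _ =>
      Submodule.smul_mem _ _ (memC C S' V hm)
  | zero => simpa using (spanC (R := R) C p).zero_mem
  | add x y _ _ hx hy => simpa [mul_add] using Submodule.add_mem _ hx hy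
  | smul c x _ hx => simpa [mul_smul_comm] using Submodule.smul_mem _ c hx

include hC2 hp in
theorem iota_mem {x : A} (hx : x ∈ spanC (R := R) C p) : ι x ∈ spanC (R := R) C p := by
  induction hx using Submodule.span_induction with
  | mem x hx =>
    obtain ⟨m, U, V, hm, rfl⟩ := hx
    have h2 : ι (C m U V) = (ι (C m U V) - C m V U) + C m V U :=
      (sub_add_cancel _ _).symm
    rw [h2]
    exact Submodule.add_mem _ (spanC_mono C (fun m' hm' => hp hm'.le hm) (hC2 m U V))
      (memC C V U hm)
  | zero => simpa using (spanC (R := R) C p).zero_mem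
  | add x y _ _ hx hy => simpa [map_add] using Submodule.add_mem _ hx hy
  | smul c x _ hx => simpa [map_smul] using Submodule.smul_mem _ c hx

include hC2 hC3 hι2 hιmul hp in
theorem mul_mem_right {x : A} (hx : x ∈ spanC (R := R) C p) (a : A) :
    x * a ∈ spanC (R := R) C p := by
  have key : x * a = ι (ι a * ι x) := by
    rw [hιmul, hι2, hι2]
  rw [key]
  exact iota_mem C ι hC2 hp
    (mul_mem_left C r hC3 hp (iota_mem C ι hC2 hp hx) (ι a))

end Ideal


/-- Row span: `C l S -` together with strictly lower cell elements. -/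
def rowSpan (l : Λ) (S : M l) : Submodule R A :=
  Submodule.span R {x | (∃ V', x = C l S V') ∨ ∃ m, ∃ U' V' : M m, m < l ∧ x = C m U' V'}

/-- Column span: `C l - U` together with strictly lower cell elements. -/
def colSpan (l : Λ) (U : M l) : Submodule R A :=
  Submodule.span R {x | (∃ S', x = C l S' U) ∨ ∃ m, ∃ U' V' : M m, m < l ∧ x = C m U' V'}

theorem lt_le_row (l : Λ) (S : M l) :
    spanC (R := R) C (· < l) ≤ rowSpan (R := R) C l S := by
  refine Submodule.span_mono ?_
  rintro x ⟨m, U, V, hm, rfl⟩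
  exact Or.inr ⟨m, U, V, hm, rfl⟩

theorem lt_le_col (l : Λ) (U : M l) :
    spanC (R := R) C (· < l) ≤ colSpan (R := R) C l U := by
  refine Submodule.span_mono ?_
  rintro x ⟨m, U', V', hm, rfl⟩
  exact Or.inr ⟨m, U', V', hm, rfl⟩

include hC3 in
theorem col_mem (a : A) (l : Λ) (S U : M l) :
    a * C l S U ∈ colSpan (R := R) C l U := by
  have h2 : a * C l S U
      = (a * C l S U - ∑ S', r a l S' S • C l S' U) + ∑ S', r a l S' S • C l S' U :=
    (sub_add_cancel _ _).symm
  rw [h2]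
  refine Submodule.add_mem _ (lt_le_col C l U (hC3 a l S U)) ?_
  exact Submodule.sum_mem _ fun S' _ => Submodule.smul_mem _ _
    (Submodule.subset_span (Or.inl ⟨S', rfl⟩))

include hι2 hιmul hC2 hC3 in
theorem row_mem (a : A) (l : Λ) (S U : M l) :
    C l S U * a ∈ rowSpan (R := R) C l S := by
  have key : C l S U * a = ι (ι a * ι (C l S U)) := by
    rw [hιmul, hι2, hι2]
  rw [key]
  have hdc : ∀ {{m n : Λ}}, m ≤ n → n < l → m < l := fun _ _ h1 h2 => lt_of_le_of_lt h1 h2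
  have hsplit : ι a * ι (C l S U)
      = ι a * C l U S + ι a * (ι (C l S U) - C l U S) := by
    rw [← mul_add]; congr 1; abel
  rw [hsplit, map_add]
  refine Submodule.add_mem _ ?_ ?_
  · -- ι (ι a * C l U S)
    have h2 : ι a * C l U S
        = (ι a * C l U S - ∑ U', r (ι a) l U' U • C l U' S)
          + ∑ U', r (ι a) l U' U • C l U' S := (sub_add_cancel _ _).symm
    rw [h2, map_add]
    refine Submodule.add_mem _ ?_ ?_
    · exact lt_le_row C l S (iota_mem C ι hC2 hdc (hC3 (ι a) l U S))
    · rw [map_sum]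
      refine Submodule.sum_mem _ fun U' _ => ?_
      rw [map_smul]
      refine Submodule.smul_mem _ _ ?_
      have h3 : ι (C l U' S) = C l S U' + (ι (C l U' S) - C l S U') := by abel
      rw [h3]
      exact Submodule.add_mem _ (Submodule.subset_span (Or.inl ⟨U', rfl⟩))
        (lt_le_row C l S (hC2 l U' S))
  · refine lt_le_row C l S (iota_mem C ι hC2 hdc ?_)
    exact mul_mem_left C r hC3 hdc (hC2 l S U) (ι a)

include hbC in
theorem reprC_row {l : Λ} {S : M l} {x : A}
    (hx : x ∈ rowSpan (R := R) C l S) (X : M l) {Y : M l} (hY : Y ≠ S) :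
    bC.repr x ⟨l, (Y, X)⟩ = 0 := by
  induction hx using Submodule.span_induction with
  | mem x hx =>
    rcases hx with ⟨V', rfl⟩ | ⟨m, U', V', hm, rfl⟩
    · rw [← hbC, bC.repr_self]
      refine Finsupp.single_eq_of_ne' fun h => ?_
      rw [Sigma.mk.inj_iff] at h
      have := h.2
      rw [heq_iff_eq, Prod.mk.injEq] at this
      exact hY this.1.symm
    · rw [← hbC, bC.repr_self]
      refine Finsupp.single_eq_of_ne' fun h => ?_
      rw [Sigma.mk.inj_iff] at h
      exact absurd h.1 (ne_of_lt hm)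
  | zero => simp
  | add x y _ _ hx hy => simp [hx, hy]
  | smul c x _ hx => simp [hx]

include hbC in
theorem reprC_col {l : Λ} {U : M l} {x : A}
    (hx : x ∈ colSpan (R := R) C l U) (Y : M l) {X : M l} (hX : X ≠ U) :
    bC.repr x ⟨l, (Y, X)⟩ = 0 := by
  induction hx using Submodule.span_induction with
  | mem x hx =>
    rcases hx with ⟨S', rfl⟩ | ⟨m, U', V', hm, rfl⟩
    · rw [← hbC, bC.repr_self]
      refine Finsupp.single_eq_of_ne' fun h => ?_
      rw [Sigma.mk.inj_iff] at h
      have := h.2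
      rw [heq_iff_eq, Prod.mk.injEq] at this
      exact hX this.2.symm
    · rw [← hbC, bC.repr_self]
      refine Finsupp.single_eq_of_ne' fun h => ?_
      rw [Sigma.mk.inj_iff] at h
      exact absurd h.1 (ne_of_lt hm)
  | zero => simp
  | add x y _ _ hx hy => simp [hx, hy]
  | smul c x _ hx => simp [hx]


variable (httr : ∀ x y, t (x * y) = t (y * x))

include hbC hdual hbD hC3 in
theorem C_mul_D_zero_of_not_le {l m : Λ} (S U : M l) (X Y : M m) (h : ¬ m ≤ l) :
    C l S U * Dd m X Y = 0 := by
  refine bD.ext_elem fun σ => ?_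
  obtain ⟨n, P, Q⟩ := σ
  rw [map_zero, LB C t Dd hdual bD hbD, Finsupp.zero_apply, ← mul_assoc,
    LA C bC hbC t Dd hdual]
  refine reprC_span C bC hbC (· ≤ l) ?_ m Y X h
  exact mul_mem_left C r hC3 (fun _ _ h1 h2 => le_trans h1 h2)
    (memC (R := R) C S U le_rfl) (C n Q P)

include hbC hdual hbD hC3 in
theorem C_mul_D_zero_of_ne {l : Λ} {S U X Y : M l} (h : X ≠ U) :
    C l S U * Dd l X Y = 0 := by
  refine bD.ext_elem fun σ => ?_
  obtain ⟨n, P, Q⟩ := σ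
  rw [map_zero, LB C t Dd hdual bD hbD, Finsupp.zero_apply, ← mul_assoc,
    LA C bC hbC t Dd hdual]
  exact reprC_col C bC hbC (col_mem C r hC3 (C n Q P) l S U) Y h

include hbC hdual hbD hι2 hιmul hC2 hC3 httr in
theorem D_mul_C_zero_of_not_le {l m : Λ} (X Y : M m) (S U : M l) (h : ¬ m ≤ l) :
    Dd m X Y * C l S U = 0 := by
  refine bD.ext_elem fun σ => ?_
  obtain ⟨n, P, Q⟩ := σ
  rw [map_zero, LB C t Dd hdual bD hbD, Finsupp.zero_apply, ← mul_assoc,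
    httr, ← mul_assoc, LA C bC hbC t Dd hdual]
  refine reprC_span C bC hbC (· ≤ l) ?_ m Y X h
  exact mul_mem_right C ι hι2 hιmul hC2 r hC3 (fun _ _ h1 h2 => le_trans h1 h2)
    (memC (R := R) C S U le_rfl) (C n Q P)

include hbC hdual hbD hι2 hιmul hC2 hC3 httr in
theorem D_mul_C_zero_of_ne {l : Λ} {X Y S U : M l} (h : Y ≠ S) :
    Dd l X Y * C l S U = 0 := by
  refine bD.ext_elem fun σ => ?_
  obtain ⟨n, P, Q⟩ := σ
  rw [map_zero, LB C t Dd hdual bD hbD, Finsupp.zero_apply, ← mul_assoc,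
    httr, ← mul_assoc, LA C bC hbC t Dd hdual]
  exact reprC_row C bC hbC
    (row_mem C ι hι2 hιmul hC2 r hC3 (C n Q P) l S U) X h


/-- Span of dual-basis elements with index strictly above `l`. -/
def GeD (l : Λ) : Submodule R A :=
  Submodule.span R {x | ∃ n, ∃ P Q : M n, l < n ∧ x = Dd n P Q}

include hbC hdual hbD hC3 in
theorem C_mul_Ge_zero {l : Λ} (S T : M l) {x : A}
    (hx : x ∈ GeD (R := R) Dd l) : C l S T * x = 0 := by
  induction hx using Submodule.span_induction with
  | mem x hx =>
    obtain ⟨n, P, Q, hn, rfl⟩ := hx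
    exact C_mul_D_zero_of_not_le C bC hbC t Dd hdual bD hbD r hC3 S T P Q
      fun hle => absurd (lt_of_lt_of_le hn hle) (lt_irrefl l)
  | zero => simp
  | add x y _ _ hx hy => simp [mul_add, hx, hy]
  | smul c x _ hx => simp [mul_smul_comm, hx]

include hbD in
theorem mem_GeD_of_repr {l : Λ} {x : A}
    (h : ∀ (n : Λ) (P Q : M n), bD.repr x ⟨n, (P, Q)⟩ ≠ 0 → l < n) :
    x ∈ GeD (R := R) Dd l := by
  rw [← bD.sum_repr x]
  refine Submodule.sum_mem _ fun σ _ => ?_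
  obtain ⟨n, P, Q⟩ := σ
  by_cases hc : bD.repr x ⟨n, (P, Q)⟩ = 0
  · rw [hc, zero_smul]; exact Submodule.zero_mem _
  · exact Submodule.smul_mem _ _
      (Submodule.subset_span ⟨n, P, Q, h n P Q hc, hbD n P Q⟩)

include hbC hdual hbD hC3 httr in
theorem reprD_D_mul_zero {l n : Λ} (T V : M l) (a : A) (P Q : M n)
    (h : ¬ l ≤ n) : bD.repr (Dd l T V * a) ⟨n, (P, Q)⟩ = 0 := by
  rw [LB C t Dd hdual bD hbD, ← mul_assoc, httr, ← mul_assoc,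
    LA C bC hbC t Dd hdual]
  refine reprC_span C bC hbC (· ≤ n) ?_ l V T h
  exact mul_mem_left C r hC3 (fun _ _ h1 h2 => le_trans h1 h2)
    (memC (R := R) C Q P le_rfl) a

include hbC in
theorem reprC_single (c : R) {l : Λ} (S T Y X : M l) :
    bC.repr (c • C l S T) ⟨l, (Y, X)⟩ = if S = Y ∧ T = X then c else 0 := by
  rw [map_smul, ← hbC l S T, bC.repr_self, Finsupp.smul_single, smul_eq_mul, mul_one,
    Finsupp.single_apply]
  by_cases h : S = Y ∧ T = X
  · obtain ⟨rfl, rfl⟩ := h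
    simp
  · rw [if_neg h, if_neg]
    intro he
    apply h
    have h2 := (Sigma.mk.inj_iff.mp he).2
    rw [heq_iff_eq, Prod.mk.injEq] at h2
    exact h2

include hbC in
theorem reprC_single' {l : Λ} (S T Y X : M l) :
    bC.repr (C l S T) ⟨l, (Y, X)⟩ = if S = Y ∧ T = X then 1 else 0 := by
  have := reprC_single (R := R) C bC hbC (1 : R) S T Y X
  rwa [one_smul] at this

include hbC hdual hbD hC3 httr in
theorem reprD_D_mul_diag {l : Λ} (T V : M l) (a : A) (P Q : M l) :
    bD.repr (Dd l T V * a) ⟨l, (P, Q)⟩ = if P = T then r a l V Q else 0 := by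
  rw [LB C t Dd hdual bD hbD, ← mul_assoc, httr, ← mul_assoc,
    LA C bC hbC t Dd hdual]
  have h2 : a * C l Q P
      = (a * C l Q P - ∑ Q', r a l Q' Q • C l Q' P) + ∑ Q', r a l Q' Q • C l Q' P :=
    (sub_add_cancel _ _).symm
  rw [h2, map_add, Finsupp.add_apply,
    reprC_span C bC hbC (· < l) (hC3 a l Q P) l V T (lt_irrefl l),
    zero_add, map_sum, Finsupp.finset_sum_apply]
  have h3 : ∀ Q' : M l, bC.repr (r a l Q' Q • C l Q' P) ⟨l, (V, T)⟩
      = if Q' = V ∧ P = T then r a l Q' Q else 0 := fun Q' =>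
    reprC_single C bC hbC _ _ _ _ _
  rw [Finset.sum_congr rfl fun Q' _ => h3 Q']
  by_cases hPT : P = T
  · simp [hPT, Finset.sum_ite_eq']
  · simp [hPT]

variable (Φ : ∀ l, M l → M l → R)
    (hΦ : ∀ l (S T U V : M l), C l S T * C l U V - Φ l T U • C l S V ∈
      Submodule.span R {x | ∃ m, ∃ U' V' : M m, m < l ∧ x = C m U' V'})

include hbC hC3 hΦ in
theorem rC (l : Λ) (Aa B Q' Q : M l) :
    r (C l Aa B) l Q' Q = if Q' = Aa then Φ l B Q else 0 := by
  have h1 := hC3 (C l Aa B) l Q Q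
  have h2 := hΦ l Aa B Q Q
  have h3 := Submodule.sub_mem _ h2 h1
  have h4 : (C l Aa B * C l Q Q - Φ l B Q • C l Aa Q)
      - (C l Aa B * C l Q Q - ∑ S', r (C l Aa B) l S' Q • C l S' Q)
      = (∑ S', r (C l Aa B) l S' Q • C l S' Q) - Φ l B Q • C l Aa Q := by abel
  rw [h4] at h3
  have h5 := reprC_span C bC hbC (· < l) h3 l Q' Q (lt_irrefl l)
  rw [map_sub, Finsupp.sub_apply, map_sum, Finsupp.finset_sum_apply] at h5
  have h6 : ∀ S' : M l, bC.repr (r (C l Aa B) l S' Q • C l S' Q) ⟨l, (Q', Q)⟩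
      = if S' = Q' then r (C l Aa B) l S' Q else 0 := by
    intro S'
    rw [reprC_single C bC hbC]
    simp
  rw [Finset.sum_congr rfl fun S' _ => h6 S', Finset.sum_ite_eq',
    reprC_single C bC hbC] at h5
  simp only [Finset.mem_univ, if_true, and_true] at h5
  have h8 := sub_eq_zero.mp h5
  rw [h8]
  by_cases h : Q' = Aa
  · simp [h]
  · rw [if_neg (fun hh => h hh.symm), if_neg h]

include hbC hι2 hιmul hC2 hC3 hΦ in
theorem PhiSym (l : Λ) (T U : M l) : Φ l T U = Φ l U T := by
  classical
  have h0 := hΦ l T T U U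
  have hdc : ∀ {{m n : Λ}}, m ≤ n → n < l → m < l := fun _ _ h1 h2 => lt_of_le_of_lt h1 h2
  have hι0 : ι (C l T T * C l U U - Φ l T U • C l T U) ∈ spanC (R := R) C (· < l) :=
    iota_mem C ι hC2 hdc h0
  have e1 : ι (C l T T * C l U U - Φ l T U • C l T U)
      = ι (C l U U) * ι (C l T T) - Φ l T U • ι (C l T U) := by
    rw [map_sub, map_smul, hιmul]
  set w1 := ι (C l U U) - C l U U with hw1
  set w2 := ι (C l T T) - C l T T with hw2
  set w3 := ι (C l T U) - C l U T with hw3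
  have hw1m : w1 ∈ spanC (R := R) C (· < l) := hC2 l U U
  have hw2m : w2 ∈ spanC (R := R) C (· < l) := hC2 l T T
  have hw3m : w3 ∈ spanC (R := R) C (· < l) := hC2 l T U
  have e2 : ι (C l U U) * ι (C l T T) - Φ l T U • ι (C l T U)
      = (C l U U * C l T T - Φ l T U • C l U T)
        + (C l U U * w2 + w1 * C l T T + w1 * w2 - Φ l T U • w3) := by
    have : ι (C l U U) = C l U U + w1 := by rw [hw1]; abel
    have h2' : ι (C l T T) = C l T T + w2 := by rw [hw2]; abel
    have h3' : ι (C l T U) = C l U T + w3 := by rw [hw3]; abel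
    rw [this, h2', h3']
    rw [add_mul, mul_add, mul_add, smul_add]
    abel
  have hjunk : (C l U U * w2 + w1 * C l T T + w1 * w2 - Φ l T U • w3)
      ∈ spanC (R := R) C (· < l) := by
    refine Submodule.sub_mem _ (Submodule.add_mem _ (Submodule.add_mem _ ?_ ?_) ?_)
      (Submodule.smul_mem _ _ hw3m)
    · exact mul_mem_left C r hC3 hdc hw2m _
    · exact mul_mem_right C ι hι2 hιmul hC2 r hC3 hdc hw1m _
    · exact mul_mem_right C ι hι2 hιmul hC2 r hC3 hdc hw1m _
  have e3 : (C l U U * C l T T - Φ l T U • C l U T) ∈ spanC (R := R) C (· < l) := by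
    have hι0' : (C l U U * C l T T - Φ l T U • C l U T)
        + (C l U U * w2 + w1 * C l T T + w1 * w2 - Φ l T U • w3)
        ∈ spanC (R := R) C (· < l) := by
      rw [← e2, ← e1]; exact hι0
    have := Submodule.sub_mem _ hι0' hjunk
    simpa using this
  have h4 := hΦ l U U T T
  have h5 := Submodule.sub_mem _ e3 h4
  have h6 : (C l U U * C l T T - Φ l T U • C l U T)
      - (C l U U * C l T T - Φ l U T • C l U T)
      = (Φ l U T - Φ l T U) • C l U T := by
    rw [sub_smul]; abel
  rw [h6] at h5
  have h7 := reprC_span C bC hbC (· < l) h5 l U T (lt_irrefl l)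
  rw [reprC_single C bC hbC, if_pos ⟨rfl, rfl⟩] at h7
  have := sub_eq_zero.mp h7
  exact this.symm


include hbC hdual hbD hC3 httr hΦ in
theorem D_mul_C_expand (l : Λ) (T V T' : M l) :
    Dd l T V * C l V T' - ∑ Q, Φ l T' Q • Dd l T Q ∈ GeD (R := R) Dd l := by
  refine mem_GeD_of_repr Dd bD hbD ?_
  intro n P Q0 hne
  by_contra hn
  apply hne
  rw [map_sub, Finsupp.sub_apply]
  by_cases hle : l ≤ n
  · have hnl : n = l := le_antisymm (by by_contra hgt; exact hn (lt_of_le_of_ne hle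
      (fun he => hgt (he ▸ le_rfl)))) hle
    subst hnl
    rw [reprD_D_mul_diag C bC hbC t Dd hdual bD hbD r hC3 httr,
      map_sum, Finsupp.finset_sum_apply]
    have h3 : ∀ Q' : M n, bD.repr (Φ n T' Q' • Dd n T Q') ⟨n, (P, Q0)⟩
        = if T = P ∧ Q' = Q0 then Φ n T' Q' else 0 := by
      intro Q'
      rw [map_smul, ← hbD n T Q', bD.repr_self, Finsupp.smul_single, smul_eq_mul,
        mul_one, Finsupp.single_apply]
      by_cases h : T = P ∧ Q' = Q0
      · obtain ⟨rfl, rfl⟩ := h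
        simp
      · rw [if_neg h, if_neg]
        intro he
        apply h
        have h2 := (Sigma.mk.inj_iff.mp he).2
        rw [heq_iff_eq, Prod.mk.injEq] at h2
        exact h2
    rw [Finset.sum_congr rfl fun Q' _ => h3 Q']
    rw [rC C bC hbC r hC3 Φ hΦ]
    by_cases hPT : P = T
    · subst hPT
      simp [Finset.sum_ite_eq']
    · rw [if_neg hPT]
      rw [Finset.sum_eq_zero, sub_zero]
      intro Q' _
      rw [if_neg]
      rintro ⟨h1', _⟩
      exact hPT h1'.symm
  · rw [reprD_D_mul_zero C bC hbC t Dd hdual bD hbD r hC3 httr T V _ P Q0 hle]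
    rw [map_sum, Finsupp.finset_sum_apply, Finset.sum_eq_zero, sub_zero]
    intro Q' _
    rw [map_smul, ← hbD l T Q', bD.repr_self, Finsupp.smul_single, smul_eq_mul,
      mul_one, Finsupp.single_apply, if_neg]
    intro he
    exact hle (le_of_eq (Sigma.mk.inj_iff.mp he).1)

variable (Ψ : ∀ l, M l → M l → R)
    (hΨ : ∀ l (S T U V : M l), Dd l S T * Dd l U V - Ψ l T U • Dd l S V ∈
      Submodule.span R {x | ∃ m, ∃ U' V' : M m, l < m ∧ x = Dd m U' V'})
    (k : Λ → R)
    (hk : ∀ l (V : M l), ∑ X : M l, Φ l X V * Ψ l X V = k l)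

include hbC hdual hbD hι2 hιmul hC2 hC3 httr hΦ hΨ hk in
theorem star (l : Λ) (S T V T' W : M l) :
    (C l S T * Dd l T V) * (C l V T' * Dd l T' W) = k l • (C l S T * Dd l T W) := by
  have hGe_mul : ∀ {x : A}, x ∈ GeD (R := R) Dd l → ∀ a, x * a ∈ GeD (R := R) Dd l := by
    intro x hx a
    induction hx using Submodule.span_induction with
    | mem x hx =>
      obtain ⟨n, P, Q, hnl, rfl⟩ := hx
      refine mem_GeD_of_repr Dd bD hbD ?_
      intro n' P' Q' hne
      by_contra hn'
      apply hne
      refine reprD_D_mul_zero C bC hbC t Dd hdual bD hbD r hC3 httr P Q a P' Q' ?_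
      intro hle
      exact hn' (lt_of_lt_of_le hnl hle)
    | zero => simpa using (GeD (R := R) Dd l).zero_mem
    | add x y _ _ hx hy => simpa [add_mul] using Submodule.add_mem _ hx hy
    | smul c x _ hx => simpa [smul_mul_assoc] using Submodule.smul_mem _ c hx
  have hkl : ∑ Q, Φ l T' Q * Ψ l Q T' = k l := by
    rw [← hk l T']
    refine Finset.sum_congr rfl fun Q _ => ?_
    rw [PhiSym C bC hbC ι hι2 hιmul hC2 r hC3 Φ hΦ l T' Q]
  set g := Dd l T V * C l V T' - ∑ Q, Φ l T' Q • Dd l T Q with hg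
  have hgmem : g ∈ GeD (R := R) Dd l :=
    D_mul_C_expand C bC hbC t Dd hdual bD hbD r hC3 httr Φ hΦ l T V T'
  have hsplit : Dd l T V * C l V T' = (∑ Q, Φ l T' Q • Dd l T Q) + g := by
    rw [hg]; abel
  have key : (Dd l T V * C l V T') * Dd l T' W - k l • Dd l T W ∈ GeD (R := R) Dd l := by
    have e1 : (Dd l T V * C l V T') * Dd l T' W - k l • Dd l T W
        = g * Dd l T' W
          + ∑ Q, Φ l T' Q • (Dd l T Q * Dd l T' W - Ψ l Q T' • Dd l T W) := by
      rw [hsplit, add_mul, Finset.sum_mul]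
      have e2 : ∀ Q : M l, (Φ l T' Q • Dd l T Q) * Dd l T' W
          = Φ l T' Q • (Dd l T Q * Dd l T' W) := fun Q => smul_mul_assoc _ _ _
      rw [Finset.sum_congr rfl fun Q _ => e2 Q]
      have e3 : ∑ Q, Φ l T' Q • (Dd l T Q * Dd l T' W - Ψ l Q T' • Dd l T W)
          = (∑ Q, Φ l T' Q • (Dd l T Q * Dd l T' W))
            - (∑ Q, Φ l T' Q * Ψ l Q T') • Dd l T W := by
        rw [Finset.sum_smul]
        rw [← Finset.sum_sub_distrib]
        refine Finset.sum_congr rfl fun Q _ => ?_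
        rw [smul_sub, smul_smul]
      rw [e3, hkl]
      abel
    rw [e1]
    refine Submodule.add_mem _ (hGe_mul hgmem _) ?_
    exact Submodule.sum_mem _ fun Q _ => Submodule.smul_mem _ _ (hΨ l T Q T' W)
  have final : (Dd l T V * C l V T') * Dd l T' W
      = k l • Dd l T W + ((Dd l T V * C l V T') * Dd l T' W - k l • Dd l T W) := by abel
  rw [mul_assoc, ← mul_assoc (Dd l T V), final, mul_add,
    C_mul_Ge_zero C bC hbC t Dd hdual bD hbD r hC3 S T key, add_zero,
    mul_smul_comm]


section Mixed

variable (t2 : A →ₗ[R] R)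
    (Dd2 : ∀ l, M l → M l → A)
    (hdual2 : ∀ l m (S T : M l) (U V : M m),
      t2 (C l S T * Dd2 m U V) =
        if (⟨l, (S, T)⟩ : (l : Λ) × (M l × M l)) = ⟨m, (V, U)⟩ then 1 else 0)
    (bD2 : Module.Basis ((l : Λ) × (M l × M l)) R A)
    (hbD2 : ∀ l S T, bD2 ⟨l, (S, T)⟩ = Dd2 l S T)
    (httr2 : ∀ x y, t2 (x * y) = t2 (y * x))

include hbC hdual hbD httr hdual2 hbD2 httr2 hι2 hιmul hC2 hC3 in
theorem mixed_left (l : Λ) (S U V : M l) :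
    C l S U * Dd2 l U V = t (C l V U * Dd2 l U V) • (C l S U * Dd l U V) := by
  conv_lhs => rw [show Dd2 l U V = ∑ σ, bD.repr (Dd2 l U V) σ • bD σ from
    (bD.sum_repr _).symm]
  rw [Finset.mul_sum, Finset.sum_eq_single (⟨l, (U, V)⟩ : (l : Λ) × (M l × M l))]
  · rw [hbD, mul_smul_comm, LB C t Dd hdual bD hbD]
  · rintro ⟨n, P, Q⟩ _ hne
    by_cases hle : n ≤ l
    · by_cases hnl : n = l
      · subst hnl
        by_cases hPU : P = U
        · subst hPU
          have hQV : Q ≠ V := by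
            intro h; exact hne (by rw [h])
          rw [LB C t Dd hdual bD hbD, httr,
            D_mul_C_zero_of_ne C bC hbC t2 Dd2 hdual2 bD2 hbD2 ι hι2 hιmul hC2 r
              hC3 httr2 (Ne.symm hQV), map_zero, zero_smul, mul_zero]
        · rw [hbD, mul_smul_comm,
            C_mul_D_zero_of_ne C bC hbC t Dd hdual bD hbD r hC3 hPU, smul_zero]
      · have hln : ¬ l ≤ n := fun h => hnl (le_antisymm hle h)
        rw [LB C t Dd hdual bD hbD, httr,
          D_mul_C_zero_of_not_le C bC hbC t2 Dd2 hdual2 bD2 hbD2 ι hι2 hιmul hC2 r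
            hC3 httr2 U V Q P hln, map_zero, zero_smul, mul_zero]
    · rw [hbD, mul_smul_comm,
        C_mul_D_zero_of_not_le C bC hbC t Dd hdual bD hbD r hC3 S U P Q hle,
        smul_zero]
  · intro h
    exact absurd (Finset.mem_univ _) h

include hbC hdual hbD httr hdual2 hbD2 httr2 hι2 hιmul hC2 hC3 in
theorem mixed_right (l : Λ) (S U V : M l) :
    Dd2 l U V * C l V S = t (C l V U * Dd2 l U V) • (Dd l U V * C l V S) := by
  conv_lhs => rw [show Dd2 l U V = ∑ σ, bD.repr (Dd2 l U V) σ • bD σ from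
    (bD.sum_repr _).symm]
  rw [Finset.sum_mul, Finset.sum_eq_single (⟨l, (U, V)⟩ : (l : Λ) × (M l × M l))]
  · rw [hbD, smul_mul_assoc, LB C t Dd hdual bD hbD]
  · rintro ⟨n, P, Q⟩ _ hne
    by_cases hle : n ≤ l
    · by_cases hnl : n = l
      · subst hnl
        by_cases hQV : Q = V
        · subst hQV
          have hPU : P ≠ U := by
            intro h; exact hne (by rw [h])
          rw [LB C t Dd hdual bD hbD,
            C_mul_D_zero_of_ne C bC hbC t2 Dd2 hdual2 bD2 hbD2 r hC3
              (fun h => hPU h.symm), map_zero, zero_smul, zero_mul]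
        · rw [hbD, smul_mul_assoc,
            D_mul_C_zero_of_ne C bC hbC t Dd hdual bD hbD ι hι2 hιmul hC2 r hC3
              httr hQV, smul_zero]
      · have hln : ¬ l ≤ n := fun h => hnl (le_antisymm hle h)
        rw [LB C t Dd hdual bD hbD,
          C_mul_D_zero_of_not_le C bC hbC t2 Dd2 hdual2 bD2 hbD2 r hC3 Q P U V hln,
          map_zero, zero_smul, zero_mul]
    · rw [hbD, smul_mul_assoc,
        D_mul_C_zero_of_not_le C bC hbC t Dd hdual bD hbD ι hι2 hιmul hC2 r hC3
          httr P Q V S hle, smul_zero]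
  · intro h
    exact absurd (Finset.mem_univ _) h

end Mixed

end Aux



/-- Theorem 4.2(2): if `τ` and `τ′` are two symmetrizing traces with dual bases `D`
and `d`, then `C l S U * d l U V = τ (C l V U * d l U V) • (C l S U * D l U V)`;
consequently the ideal `I` is independent of the choice of symmetrizing trace. -/
theorem I_independent_of_trace
    {R A : Type*} [CommRing R] [Ring A] [Algebra R A]
    {Λ : Type*} [PartialOrder Λ] [Fintype Λ] [DecidableEq Λ]
    {M : Λ → Type*} [∀ l, Fintype (M l)] [∀ l, DecidableEq (M l)]
    (C D : ∀ l, M l → M l → A)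
    (bC : Module.Basis ((l : Λ) × (M l × M l)) R A)
    (hbC : ∀ l S T, bC ⟨l, (S, T)⟩ = C l S T)
    (ι : A →ₗ[R] A)
    (hι2 : ∀ x, ι (ι x) = x)
    (hιmul : ∀ x y, ι (x * y) = ι y * ι x)
    (hC2 : ∀ l (S T : M l), ι (C l S T) - C l T S ∈
      Submodule.span R {x | ∃ m, ∃ U V : M m, m < l ∧ x = C m U V})
    (r : A → ∀ l, M l → M l → R)
    (hC3 : ∀ (a : A) l (S T : M l), a * C l S T - ∑ S', r a l S' S • C l S' T ∈
      Submodule.span R {x | ∃ m, ∃ U V : M m, m < l ∧ x = C m U V})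
    (τ : A →ₗ[R] R)
    (hτtr : ∀ x y, τ (x * y) = τ (y * x))
    (bD : Module.Basis ((l : Λ) × (M l × M l)) R A)
    (hbD : ∀ l S T, bD ⟨l, (S, T)⟩ = D l S T)
    (hdual : ∀ l m (S T : M l) (U V : M m),
      τ (C l S T * D m U V) =
        if (⟨l, (S, T)⟩ : (l : Λ) × (M l × M l)) = ⟨m, (V, U)⟩ then 1 else 0)
    [IsDomain R]
    (d : ∀ l, M l → M l → A)
    (τ' : A →ₗ[R] R)
    (hτ'tr : ∀ x y, τ' (x * y) = τ' (y * x))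
    (bd : Module.Basis ((l : Λ) × (M l × M l)) R A)
    (hbd : ∀ l S T, bd ⟨l, (S, T)⟩ = d l S T)
    (hdual' : ∀ l m (S T : M l) (U V : M m),
      τ' (C l S T * d m U V) =
        if (⟨l, (S, T)⟩ : (l : Λ) × (M l × M l)) = ⟨m, (V, U)⟩ then 1 else 0)
    (Φ Ψ Ψ' : ∀ l, M l → M l → R)
    (hΦ : ∀ l (S T U V : M l), C l S T * C l U V - Φ l T U • C l S V ∈
      Submodule.span R {x | ∃ m, ∃ U' V' : M m, m < l ∧ x = C m U' V'})
    (hΨ : ∀ l (S T U V : M l), D l S T * D l U V - Ψ l T U • D l S V ∈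
      Submodule.span R {x | ∃ m, ∃ U' V' : M m, l < m ∧ x = D m U' V'})
    (hΨ' : ∀ l (S T U V : M l), d l S T * d l U V - Ψ' l T U • d l S V ∈
      Submodule.span R {x | ∃ m, ∃ U' V' : M m, l < m ∧ x = d m U' V'})
    (k k' : Λ → R)
    (hk : ∀ l (V : M l), ∑ X : M l, Φ l X V * Ψ l X V = k l)
    (hk' : ∀ l (V : M l), ∑ X : M l, Φ l X V * Ψ' l X V = k' l) :
    (∀ l (S U V : M l),
      C l S U * d l U V = τ (C l V U * d l U V) • (C l S U * D l U V)) ∧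
    ((⨆ l ∈ {l : Λ | k l = 0},
        Submodule.span R {x : A | ∃ S U V : M l, x = C l S V * D l V U}) +
      (⨆ l ∈ {l : Λ | k l = 0},
        Submodule.span R {x : A | ∃ S U V : M l, x = D l U V * C l V S}) =
     (⨆ l ∈ {l : Λ | k' l = 0},
        Submodule.span R {x : A | ∃ S U V : M l, x = C l S V * d l V U}) +
      (⨆ l ∈ {l : Λ | k' l = 0},
        Submodule.span R {x : A | ∃ S U V : M l, x = d l U V * C l V S})) := by
  classical
  -- Part 1
  have part1 : ∀ l (S U V : M l),
      C l S U * d l U V = τ (C l V U * d l U V) • (C l S U * D l U V) :=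
    fun l S U V =>
      mixed_left C bC hbC τ D hdual bD hbD ι hι2 hιmul hC2 r hC3 hτtr
        τ' d hdual' bd hbd hτ'tr l S U V
  have part1' : ∀ l (S U V : M l),
      C l S U * D l U V = τ' (C l V U * D l U V) • (C l S U * d l U V) :=
    fun l S U V =>
      mixed_left C bC hbC τ' d hdual' bd hbd ι hι2 hιmul hC2 r hC3 hτ'tr
        τ D hdual bD hbD hτtr l S U V
  have part1r : ∀ l (S U V : M l),
      d l U V * C l V S = τ (C l V U * d l U V) • (D l U V * C l V S) :=
    fun l S U V =>
      mixed_right C bC hbC τ D hdual bD hbD ι hι2 hιmul hC2 r hC3 hτtr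
        τ' d hdual' bd hbd hτ'tr l S U V
  have part1r' : ∀ l (S U V : M l),
      D l U V * C l V S = τ' (C l V U * D l U V) • (d l U V * C l V S) :=
    fun l S U V =>
      mixed_right C bC hbC τ' d hdual' bd hbd ι hι2 hιmul hC2 r hC3 hτ'tr
        τ D hdual bD hbD hτtr l S U V
  refine ⟨part1, ?_⟩
  -- transfer of the vanishing of k
  have hdiag' : ∀ (l : Λ) (V : M l), τ' (C l V V * d l V V) = 1 := by
    intro l V
    rw [hdual']
    simp
  have hdiag : ∀ (l : Λ) (V : M l), τ (C l V V * D l V V) = 1 := by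
    intro l V
    rw [hdual]
    simp
  have h10 : ∀ (l : Λ), M l → k l = 0 → k' l = 0 := by
    intro l V hk0
    have hx := part1 l V V V
    have hstar := star C bC hbC τ D hdual bD hbD ι hι2 hιmul hC2 r hC3 hτtr
      Φ hΦ Ψ hΨ k hk l V V V V V
    have hstar' := star C bC hbC τ' d hdual' bd hbd ι hι2 hιmul hC2 r hC3 hτ'tr
      Φ hΦ Ψ' hΨ' k' hk' l V V V V V
    calc k' l = k' l * τ' (C l V V * d l V V) := by rw [hdiag' l V, mul_one]
      _ = τ' (k' l • (C l V V * d l V V)) := by rw [map_smul, smul_eq_mul]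
      _ = τ' ((C l V V * d l V V) * (C l V V * d l V V)) := by rw [hstar']
      _ = 0 := by
          rw [hx, smul_mul_assoc, mul_smul_comm, hstar, hk0]
          simp
  have h01 : ∀ (l : Λ), M l → k' l = 0 → k l = 0 := by
    intro l V hk0
    have hx := part1' l V V V
    have hstar := star C bC hbC τ D hdual bD hbD ι hι2 hιmul hC2 r hC3 hτtr
      Φ hΦ Ψ hΨ k hk l V V V V V
    have hstar' := star C bC hbC τ' d hdual' bd hbd ι hι2 hιmul hC2 r hC3 hτ'tr
      Φ hΦ Ψ' hΨ' k' hk' l V V V V V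
    calc k l = k l * τ (C l V V * D l V V) := by rw [hdiag l V, mul_one]
      _ = τ (k l • (C l V V * D l V V)) := by rw [map_smul, smul_eq_mul]
      _ = τ ((C l V V * D l V V) * (C l V V * D l V V)) := by rw [hstar]
      _ = 0 := by
          rw [hx, smul_mul_assoc, mul_smul_comm, hstar', hk0]
          simp
  -- the ideal is independent of the trace
  rw [Submodule.add_eq_sup, Submodule.add_eq_sup]
  refine le_antisymm (sup_le ?_ ?_) (sup_le ?_ ?_)
  · refine iSup₂_le fun l hl => Submodule.span_le.mpr ?_
    rintro x ⟨S, U, V, rfl⟩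
    rw [part1' l S V U]
    refine Submodule.smul_mem _ _ (le_sup_left (α := Submodule R A) ?_)
    refine Submodule.mem_iSup_of_mem l (Submodule.mem_iSup_of_mem (h10 l V hl) ?_)
    exact Submodule.subset_span ⟨S, U, V, rfl⟩
  · refine iSup₂_le fun l hl => Submodule.span_le.mpr ?_
    rintro x ⟨S, U, V, rfl⟩
    rw [part1r' l S U V]
    refine Submodule.smul_mem _ _ (le_sup_right (α := Submodule R A) ?_)
    refine Submodule.mem_iSup_of_mem l (Submodule.mem_iSup_of_mem (h10 l V hl) ?_)
    exact Submodule.subset_span ⟨S, U, V, rfl⟩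
  · refine iSup₂_le fun l hl => Submodule.span_le.mpr ?_
    rintro x ⟨S, U, V, rfl⟩
    rw [part1 l S V U]
    refine Submodule.smul_mem _ _ (le_sup_left (α := Submodule R A) ?_)
    refine Submodule.mem_iSup_of_mem l (Submodule.mem_iSup_of_mem (h01 l V hl) ?_)
    exact Submodule.subset_span ⟨S, U, V, rfl⟩
  · refine iSup₂_le fun l hl => Submodule.span_le.mpr ?_
    rintro x ⟨S, U, V, rfl⟩
    rw [part1r l S U V]
    refine Submodule.smul_mem _ _ (le_sup_right (α := Submodule R A) ?_)
    refine Submodule.mem_iSup_of_mem l (Submodule.mem_iSup_of_mem (h01 l V hl) ?_)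
    exact Submodule.subset_span ⟨S, U, V, rfl⟩
end

section
/- Let R be an integral domain and A a symmetric cellular algebra. If λ is the minimal element of Λ and rad λ ≠ 0, then the R-span of {C^λ_{S,T} | S,T ∈ M(λ)} is contained in the Jacobson radical of A. -/
/-- Coefficient extraction along an injective family into a basis. -/
theorem aux_basis_coeff_zero {R A ι P : Type*} [CommRing R] [AddCommGroup A] [Module R A]
    [Fintype P] (b : Module.Basis ι R A) (f : P → ι) (hf : Function.Injective f)
    (c : P → R) (h : ∑ p, c p • b (f p) = 0) : ∀ p, c p = 0 := by
  have hli : LinearIndependent R (b ∘ f) := b.linearIndependent.comp f hf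
  exact Fintype.linearIndependent_iff.mp hli c h

/-- Corollary 4.3: over an integral domain, if `l` is the minimal element of `Λ` and
the radical of the bilinear form of the cell module `W(l)` is nonzero, then the span of
`{C l S T}` is contained in the Jacobson radical of `A`. -/
theorem minimal_cell_span_in_radical
    {R A : Type*} [CommRing R] [Ring A] [Algebra R A]
    {Λ : Type*} [PartialOrder Λ] [Fintype Λ] [DecidableEq Λ]
    {M : Λ → Type*} [∀ l, Fintype (M l)] [∀ l, DecidableEq (M l)]
    (C D : ∀ l, M l → M l → A)
    (bC : Module.Basis ((l : Λ) × (M l × M l)) R A)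
    (hbC : ∀ l S T, bC ⟨l, (S, T)⟩ = C l S T)
    (ι : A →ₗ[R] A)
    (hι2 : ∀ x, ι (ι x) = x)
    (hιmul : ∀ x y, ι (x * y) = ι y * ι x)
    (hC2 : ∀ l (S T : M l), ι (C l S T) - C l T S ∈
      Submodule.span R {x | ∃ m, ∃ U V : M m, m < l ∧ x = C m U V})
    (r : A → ∀ l, M l → M l → R)
    (hC3 : ∀ (a : A) l (S T : M l), a * C l S T - ∑ S', r a l S' S • C l S' T ∈
      Submodule.span R {x | ∃ m, ∃ U V : M m, m < l ∧ x = C m U V})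
    (τ : A →ₗ[R] R)
    (hτtr : ∀ x y, τ (x * y) = τ (y * x))
    (bD : Module.Basis ((l : Λ) × (M l × M l)) R A)
    (hbD : ∀ l S T, bD ⟨l, (S, T)⟩ = D l S T)
    (hdual : ∀ l m (S T : M l) (U V : M m),
      τ (C l S T * D m U V) =
        if (⟨l, (S, T)⟩ : (l : Λ) × (M l × M l)) = ⟨m, (V, U)⟩ then 1 else 0)
    (Φ Ψ : ∀ l, M l → M l → R)
    (hΦ : ∀ l (S T U V : M l), C l S T * C l U V - Φ l T U • C l S V ∈
      Submodule.span R {x | ∃ m, ∃ U' V' : M m, m < l ∧ x = C m U' V'})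
    (hΨ : ∀ l (S T U V : M l), D l S T * D l U V - Ψ l T U • D l S V ∈
      Submodule.span R {x | ∃ m, ∃ U' V' : M m, l < m ∧ x = D m U' V'})
    [IsDomain R]
    (l : Λ) (hmin : ∀ m : Λ, l ≤ m)
    (hrad : ∃ v : M l → R, v ≠ 0 ∧ ∀ T : M l, ∑ S : M l, v S * Φ l S T = 0) :
    ∀ x ∈ Submodule.span R {x : A | ∃ S T : M l, x = C l S T},
      x ∈ Ideal.jacobson (⊥ : Ideal A) := by
  classical
  obtain ⟨v, hv0, hv⟩ := hrad
  -- the "lower order" span at the minimal element is trivial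
  have hlow : Submodule.span R {x : A | ∃ m, ∃ U V : M m, m < l ∧ x = C m U V} = ⊥ := by
    have hempty : {x : A | ∃ m, ∃ U V : M m, m < l ∧ x = C m U V} = ∅ := by
      ext x
      simp only [Set.mem_setOf_eq, Set.mem_empty_iff_false, iff_false, not_exists]
      rintro m U V ⟨hm, rfl⟩
      exact absurd (lt_of_lt_of_le hm (hmin m)) (lt_irrefl m)
    rw [hempty, Submodule.span_empty]
  -- exact left multiplication rule
  have hmul : ∀ (a : A) (S T : M l), a * C l S T = ∑ S', r a l S' S • C l S' T := by
    intro a S T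
    have h := hC3 a l S T
    rw [hlow, Submodule.mem_bot] at h
    exact sub_eq_zero.mp h
  -- exact product rule
  have hCC : ∀ S T U V : M l, C l S T * C l U V = Φ l T U • C l S V := by
    intro S T U V
    have h := hΦ l S T U V
    rw [hlow, Submodule.mem_bot] at h
    exact sub_eq_zero.mp h
  -- the dual basis family
  set d : ((m : Λ) × (M m × M m)) → A := fun i => D i.1 i.2.2 i.2.1 with hd
  have hpair : ∀ i j : ((m : Λ) × (M m × M m)),
      τ (bC i * d j) = if i = j then 1 else 0 := by
    intro i j
    have h := hdual i.1 j.1 i.2.1 i.2.2 j.2.2 j.2.1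
    have hbi : bC i = C i.1 i.2.1 i.2.2 := hbC i.1 i.2.1 i.2.2
    rw [hbi]
    exact h
  -- d is a basis
  have hdbasis : ∃ bd : Module.Basis ((m : Λ) × (M m × M m)) R A, ∀ i, bd i = d i := by
    refine ⟨bD.reindex (Equiv.mk (fun i => ⟨i.1, (i.2.2, i.2.1)⟩)
      (fun i => ⟨i.1, (i.2.2, i.2.1)⟩) (fun i => rfl) (fun i => rfl)), fun i => ?_⟩
    rw [Module.Basis.reindex_apply]
    exact hbD i.1 i.2.2 i.2.1
  obtain ⟨bd, hbd⟩ := hdbasis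
  -- expansion in the C basis
  have expb : ∀ x : A, x = ∑ i, τ (x * d i) • bC i := by
    intro x
    have hx := bC.sum_repr x
    have hco : ∀ j, τ (x * d j) = bC.repr x j := by
      intro j
      conv_lhs => rw [← hx]
      rw [Finset.sum_mul]
      have : ∀ i, (bC.repr x i • bC i) * d j = bC.repr x i • (bC i * d j) := fun i =>
        smul_mul_assoc _ _ _
      simp_rw [this, map_sum, map_smul, hpair, smul_eq_mul, mul_ite, mul_one, mul_zero]
      simp
    conv_lhs => rw [← hx]
    exact Finset.sum_congr rfl fun j _ => by rw [hco j]
  -- expansion in the d basis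
  have expd : ∀ x : A, x = ∑ i, τ (bC i * x) • d i := by
    intro x
    have hx := bd.sum_repr x
    have hx' : x = ∑ i, bd.repr x i • d i := by
      conv_lhs => rw [← hx]
      exact Finset.sum_congr rfl fun j _ => by rw [hbd j]
    have hco : ∀ j, τ (bC j * x) = bd.repr x j := by
      intro j
      conv_lhs => rw [hx']
      rw [Finset.mul_sum]
      have : ∀ i, bC j * (bd.repr x i • d i) = bd.repr x i • (bC j * d i) := fun i =>
        mul_smul_comm _ _ _
      simp_rw [this, map_sum, map_smul, hpair, smul_eq_mul, mul_ite, mul_one, mul_zero]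
      simp
    conv_lhs => rw [hx']
    exact Finset.sum_congr rfl fun j _ => by rw [hco j]
  -- C at level l times D at another level is 0
  have zero4 : ∀ (S T : M l) (m : Λ) (U V : M m), m ≠ l → C l S T * D m U V = 0 := by
    intro S T m U V hm
    have hexp := expd (C l S T * D m U V)
    rw [hexp]
    apply Finset.sum_eq_zero
    intro j _
    have : τ (bC j * (C l S T * D m U V)) = 0 := by
      rw [← mul_assoc, hmul (bC j) S T, Finset.sum_mul]
      have h1 : ∀ X, (r (bC j) l X S • C l X T) * D m U V
          = r (bC j) l X S • (C l X T * D m U V) := fun X => smul_mul_assoc _ _ _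
      simp_rw [h1, map_sum, map_smul, hdual, smul_eq_mul]
      apply Finset.sum_eq_zero
      intro X _
      rw [if_neg, mul_zero]
      intro hcontr
      exact hm (congrArg Sigma.fst hcontr).symm
    rw [this, zero_smul]
  -- centrality of ∑ i, bC i * a * d i
  have central : ∀ a x : A, x * (∑ i, bC i * a * d i) = (∑ i, bC i * a * d i) * x := by
    intro a x
    have hL : x * (∑ i, bC i * a * d i)
        = ∑ i, ∑ j, τ (x * (bC i * d j)) • (bC j * a * d i) := by
      rw [Finset.mul_sum]
      refine Finset.sum_congr rfl fun i _ => ?_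
      have h1 : x * (bC i * a * d i) = ((x * bC i) * a) * d i := by
        rw [← mul_assoc, ← mul_assoc]
      rw [h1]
      conv_lhs => rw [expb (x * bC i)]
      rw [Finset.sum_mul, Finset.sum_mul]
      refine Finset.sum_congr rfl fun j _ => ?_
      rw [smul_mul_assoc, smul_mul_assoc, mul_assoc x (bC i) (d j)]
    have hR : (∑ i, bC i * a * d i) * x
        = ∑ i, ∑ j, τ ((bC i * d j) * x) • (bC j * a * d i) := by
      rw [Finset.sum_mul]
      have h2 : ∀ i, (bC i * a * d i) * x
          = ∑ j, τ ((bC j * d i) * x) • (bC i * a * d j) := by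
        intro i
        have h1 : (bC i * a * d i) * x = (bC i * a) * (d i * x) := by
          rw [mul_assoc]
        rw [h1]
        conv_lhs => rw [expd (d i * x)]
        rw [Finset.mul_sum]
        refine Finset.sum_congr rfl fun j _ => ?_
        rw [mul_smul_comm, ← mul_assoc (bC j) (d i) x]
      simp_rw [h2]
      rw [Finset.sum_comm]
    rw [hL, hR]
    refine Finset.sum_congr rfl fun i _ => Finset.sum_congr rfl fun j _ => ?_
    rw [hτtr]
  -- trace symmetry relation (III)
  have hIII : ∀ S T U V : M l, Φ l T U * τ (C l S V) = Φ l V S * τ (C l U T) := by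
    intro S T U V
    have h1 : τ (C l S T * C l U V) = Φ l T U * τ (C l S V) := by
      rw [hCC, map_smul, smul_eq_mul]
    have h2 : τ (C l U V * C l S T) = Φ l V S * τ (C l U T) := by
      rw [hCC, map_smul, smul_eq_mul]
    rw [← h1, ← h2, hτtr]
  -- orthogonality relation (II)
  have hII : ∀ T S S' T' : M l, ∑ X, r (D l T S) l X S' * τ (C l X T')
      = if S' = S ∧ T' = T then 1 else 0 := by
    intro T S S' T'
    have h1 : τ (D l T S * C l S' T') = ∑ X, r (D l T S) l X S' * τ (C l X T') := by
      rw [hmul (D l T S) S' T', map_sum]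
      exact Finset.sum_congr rfl fun X _ => by rw [map_smul, smul_eq_mul]
    have h2 : τ (D l T S * C l S' T') = if S' = S ∧ T' = T then 1 else 0 := by
      rw [← hτtr, hdual]
      by_cases hcnd : S' = S ∧ T' = T
      · obtain ⟨ha, hb⟩ := hcnd
        subst ha; subst hb
        rw [if_pos rfl, if_pos ⟨rfl, rfl⟩]
      · rw [if_neg, if_neg hcnd]
        intro hcontr
        apply hcnd
        have h3 : (S', T') = (S, T) := sigma_mk_injective (β := fun m => M m × M m) hcontr
        exact ⟨congrArg Prod.fst h3, congrArg Prod.snd h3⟩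
    rw [← h1, h2]
  -- the trace does not vanish identically on W(l)
  have htne : ∃ S₀ V₀ : M l, τ (C l S₀ V₀) ≠ 0 := by
    obtain ⟨T₀, hT₀⟩ := Function.ne_iff.mp hv0
    by_contra hcon
    push_neg at hcon
    have h1 := hII T₀ T₀ T₀ T₀
    rw [if_pos ⟨rfl, rfl⟩] at h1
    simp only [hcon, mul_zero, Finset.sum_const_zero] at h1
    exact one_ne_zero h1.symm
  obtain ⟨S₀, V₀, hα⟩ := htne
  obtain ⟨T'₀, hT'₀⟩ := Function.ne_iff.mp hv0
  -- Main step: Φ l = 0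
  have hΦ0 : ∀ T U : M l, Φ l T U = 0 := by
    -- first show Φ l V₀ S₀ * Φ l T₁ S₁ = 0 for all T₁ S₁
    have hkey : ∀ T₁ S₁ : M l, Φ l V₀ S₀ * Φ l T₁ S₁ = 0 := by
      intro T₁ S₁
      set S' : M l := T'₀ with hS'
      set aa : A := C l S₁ T₁ with haa
      set cs : A := ∑ T', v T' • C l S' T' with hcs
      set Q : A := ∑ i, bC i * aa * d i with hQ
      -- cs kills C l X T₁ on the left
      have hcsC : ∀ X : M l, cs * C l X T₁ = 0 := by
        intro X
        rw [hcs, Finset.sum_mul]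
        have h1 : ∀ T', (v T' • C l S' T') * C l X T₁ = (v T' * Φ l T' X) • C l S' T₁ := by
          intro T'
          rw [smul_mul_assoc, hCC, smul_smul]
        simp_rw [h1, ← Finset.sum_smul, hv X, zero_smul]
      -- hence cs * Q = 0
      have hcsQ : cs * Q = 0 := by
        rw [hQ, Finset.mul_sum]
        apply Finset.sum_eq_zero
        intro i _
        rw [(mul_assoc cs (bC i * aa) (d i)).symm]
        have h2 : cs * (bC i * aa) = 0 := by
          rw [haa, hmul (bC i) S₁ T₁, Finset.mul_sum]
          apply Finset.sum_eq_zero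
          intro X _
          rw [mul_smul_comm, hcsC X, smul_zero]
        rw [h2, zero_mul]
      -- so Q * cs = 0
      have hQcs : Q * cs = 0 := by rw [hQ, ← central aa cs, ← hQ, hcsQ]
      -- expand Q * cs
      have hexpand : Q * cs = ∑ p : M l × M l,
          (v p.2 * ∑ T : M l, ∑ X : M l,
            Φ l T S₁ * (r (D l T p.1) l X S' * Φ l T₁ X)) • bC ⟨l, p⟩ := by
        rw [hQ, Finset.sum_mul]
        rw [← Finset.univ_sigma_univ, Finset.sum_sigma]
        rw [Finset.sum_eq_single_of_mem l (Finset.mem_univ l)]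
        · -- the level-l part
          have hterm : ∀ p : M l × M l, (bC ⟨l, p⟩ * aa * d ⟨l, p⟩) * cs
              = ∑ T' : M l, ∑ X : M l,
                  (Φ l p.2 S₁ * (v T' * (r (D l p.2 p.1) l X S' * Φ l T₁ X))) •
                    C l p.1 T' := by
            intro p
            have hb : bC ⟨l, p⟩ = C l p.1 p.2 := hbC l p.1 p.2
            have hdp : d ⟨l, p⟩ = D l p.2 p.1 := rfl
            rw [hb, hdp, haa, hCC p.1 p.2 S₁ T₁, smul_mul_assoc, smul_mul_assoc, mul_assoc]
            have h1 : D l p.2 p.1 * cs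
                = ∑ T', v T' • ∑ X, r (D l p.2 p.1) l X S' • C l X T' := by
              rw [hcs, Finset.mul_sum]
              refine Finset.sum_congr rfl fun T' _ => ?_
              rw [mul_smul_comm, hmul]
            rw [h1, Finset.mul_sum, Finset.smul_sum]
            refine Finset.sum_congr rfl fun T' _ => ?_
            rw [mul_smul_comm, Finset.mul_sum, Finset.smul_sum, Finset.smul_sum]
            refine Finset.sum_congr rfl fun X _ => ?_
            rw [mul_smul_comm, hCC p.1 T₁ X T', smul_smul, smul_smul, smul_smul]
            congr 1
            ring
          calc ∑ p : M l × M l, (bC ⟨l, p⟩ * aa * d ⟨l, p⟩) * cs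
              = ∑ p : M l × M l, ∑ T' : M l, ∑ X : M l,
                  (Φ l p.2 S₁ * (v T' * (r (D l p.2 p.1) l X S' * Φ l T₁ X))) •
                    C l p.1 T' := Finset.sum_congr rfl fun p _ => hterm p
            _ = ∑ S : M l, ∑ T : M l, ∑ T' : M l, ∑ X : M l,
                  (Φ l T S₁ * (v T' * (r (D l T S) l X S' * Φ l T₁ X))) • C l S T' := by
                  rw [Fintype.sum_prod_type]
            _ = ∑ S : M l, ∑ T' : M l, ∑ T : M l, ∑ X : M l,
                  (Φ l T S₁ * (v T' * (r (D l T S) l X S' * Φ l T₁ X))) • C l S T' := by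
                  exact Finset.sum_congr rfl fun S _ => Finset.sum_comm
            _ = ∑ p : M l × M l,
                  (v p.2 * ∑ T : M l, ∑ X : M l,
                    Φ l T S₁ * (r (D l T p.1) l X S' * Φ l T₁ X)) • bC ⟨l, p⟩ := by
                  rw [Fintype.sum_prod_type]
                  refine Finset.sum_congr rfl fun S _ => Finset.sum_congr rfl fun T' _ => ?_
                  rw [hbC l S T']
                  show _ = (v T' * ∑ T : M l, ∑ X : M l,
                    Φ l T S₁ * (r (D l T S) l X S' * Φ l T₁ X)) • C l S T'
                  conv_rhs => rw [Finset.mul_sum, Finset.sum_smul]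
                  refine Finset.sum_congr rfl fun T _ => ?_
                  conv_rhs => rw [Finset.mul_sum, Finset.sum_smul]
                  refine Finset.sum_congr rfl fun X _ => ?_
                  congr 1
                  ring
        · -- other levels contribute 0
          intro m _ hm
          apply Finset.sum_eq_zero
          intro p _
          have h1 : bC ⟨m, p⟩ * aa * d ⟨m, p⟩ = 0 := by
            rw [haa, hmul (bC ⟨m, p⟩) S₁ T₁, Finset.sum_mul]
            apply Finset.sum_eq_zero
            intro X _
            rw [smul_mul_assoc]
            have : d ⟨m, p⟩ = D m p.2 p.1 := rfl
            rw [this, zero4 X T₁ m p.2 p.1 hm, smul_zero]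
          rw [h1, zero_mul]
      -- extract coefficients
      have hcoef : ∀ p : M l × M l,
          v p.2 * ∑ T : M l, ∑ X : M l,
            Φ l T S₁ * (r (D l T p.1) l X S' * Φ l T₁ X) = 0 := by
        apply aux_basis_coeff_zero bC (fun p : M l × M l => (⟨l, p⟩ : (m : Λ) × (M m × M m)))
          (fun p q hpq => sigma_mk_injective (β := fun m => M m × M m) hpq)
        rw [← hexpand, hQcs]
      -- take p = (S', T'₀); divide by v T'₀
      have hK : ∑ T : M l, ∑ X : M l,
          Φ l T S₁ * (r (D l T S') l X S' * Φ l T₁ X) = 0 := by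
        have h := hcoef (S', T'₀)
        rcases mul_eq_zero.mp h with h' | h'
        · exact absurd h' hT'₀
        · exact h'
      -- multiply by α = τ (C l S₀ V₀) and use II, III
      calc Φ l V₀ S₀ * Φ l T₁ S₁
          = ∑ T : M l, Φ l V₀ S₀ * Φ l T S₁ *
              (if S' = S' ∧ T₁ = T then 1 else 0) := by
            have h1 : ∀ T : M l, Φ l V₀ S₀ * Φ l T S₁ *
                (if S' = S' ∧ T₁ = T then 1 else 0)
                = if T₁ = T then Φ l V₀ S₀ * Φ l T S₁ else 0 := by
              intro T
              by_cases hT : T₁ = T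
              · rw [if_pos ⟨rfl, hT⟩, if_pos hT, mul_one]
              · rw [if_neg (fun hcontra => hT hcontra.2), if_neg hT, mul_zero]
            rw [Finset.sum_congr rfl (fun T _ => h1 T), Finset.sum_ite_eq]
            rw [if_pos (Finset.mem_univ T₁)]
        _ = ∑ T : M l, Φ l V₀ S₀ * Φ l T S₁ *
              ∑ X : M l, r (D l T S') l X S' * τ (C l X T₁) := by
            refine Finset.sum_congr rfl fun T _ => ?_
            rw [hII T S' S' T₁]
        _ = ∑ T : M l, ∑ X : M l,
              Φ l T S₁ * (r (D l T S') l X S' * (Φ l V₀ S₀ * τ (C l X T₁))) := by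
            refine Finset.sum_congr rfl fun T _ => ?_
            rw [Finset.mul_sum]
            exact Finset.sum_congr rfl fun X _ => by ring
        _ = ∑ T : M l, ∑ X : M l,
              Φ l T S₁ * (r (D l T S') l X S' * (Φ l T₁ X * τ (C l S₀ V₀))) := by
            refine Finset.sum_congr rfl fun T _ => Finset.sum_congr rfl fun X _ => ?_
            rw [hIII S₀ T₁ X V₀]
        _ = τ (C l S₀ V₀) * ∑ T : M l, ∑ X : M l,
              Φ l T S₁ * (r (D l T S') l X S' * Φ l T₁ X) := by
            rw [Finset.mul_sum]
            refine Finset.sum_congr rfl fun T _ => ?_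
            rw [Finset.mul_sum]
            exact Finset.sum_congr rfl fun X _ => by ring
        _ = 0 := by rw [hK, mul_zero]
    -- conclude Φ l = 0
    have hβ : Φ l V₀ S₀ = 0 := by
      have := hkey V₀ S₀
      exact mul_self_eq_zero.mp this
    intro T U
    have h := hIII S₀ T U V₀
    rw [hβ, zero_mul] at h
    exact (mul_eq_zero.mp h).resolve_right hα
  -- Final step: the span is a square-zero left ideal, hence in every maximal left ideal
  intro x hx
  have hgen : {x : A | ∃ S T : M l, x = C l S T} ⊆
      (Ideal.jacobson (⊥ : Ideal A)).restrictScalars R := by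
    rintro y ⟨S, T, rfl⟩
    simp only [SetLike.mem_coe, Submodule.restrictScalars_mem]
    rw [Ideal.jacobson, Ideal.mem_sInf]
    rintro J ⟨-, hJmax⟩
    by_contra hxJ
    have hsup : J ⊔ Ideal.span {C l S T} = ⊤ := by
      apply hJmax.1.2
      rcases lt_or_eq_of_le (le_sup_left : J ≤ J ⊔ Ideal.span {C l S T}) with h | h
      · exact h
      · exfalso
        apply hxJ
        rw [h]
        exact Submodule.mem_sup_right (Ideal.subset_span rfl)
    have hone : (1 : A) ∈ J ⊔ Ideal.span {C l S T} := by rw [hsup]; trivial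
    obtain ⟨j, hj, y, hy, hjy⟩ := Submodule.mem_sup.mp hone
    obtain ⟨c, hc⟩ := Submodule.mem_span_singleton.mp hy
    have hu2 : y * y = 0 := by
      rw [← hc, smul_eq_mul]
      have h1 : C l S T * (c * C l S T) = 0 := by
        rw [hmul c S T, Finset.mul_sum]
        apply Finset.sum_eq_zero
        intro S'' _
        rw [mul_smul_comm, hCC S T S'' T, hΦ0 T S'', zero_smul, smul_zero]
      rw [mul_assoc c (C l S T) (c * C l S T), h1, mul_zero]
    have hyJ : y ∈ J := by
      have h1 : y = y * j + y * y := by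
        calc y = y * 1 := by rw [mul_one]
          _ = y * (j + y) := by rw [hjy]
          _ = y * j + y * y := by rw [mul_add]
      rw [h1, hu2, add_zero]
      exact Ideal.mul_mem_left J y hj
    have : (1 : A) ∈ J := by rw [← hjy]; exact J.add_mem hj hyJ
    exact hJmax.1.1 ((Ideal.eq_top_iff_one J).mpr this)
  exact Submodule.span_le.mpr hgen hx
end
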